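/- arXiv:2601.14592 — 2 statements merged into one kernel-verified Lean document; each statement's English description precedes it below -/
import Mathlib

section
/- Let U be a nonempty open arc of the unit circle S^1 in R^2. Then there exist vectors v1, v2 in Z^2 such that v1 and v2 are linearly independent over R, |v1| = |v2| and this common norm is a (positive) integer, and v1/|v1| and v2/|v2| both lie in U. -/
/-- The real vector in `ℝ²` associated to an integer vector. -/
noncomputable def intVec2 (v : Fin 2 → ℤ) : EuclideanSpace ℝ (Fin 2) :=
  WithLp.toLp 2 (fun i => (v i : ℝ))

/- Auxiliary material: the rational parametrization of the unit circle. -/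

noncomputable def g0 (t : ℝ) : ℝ := (1 - t^2) / (1 + t^2)
noncomputable def g1 (t : ℝ) : ℝ := 2*t / (1 + t^2)

lemma denom_pos (t : ℝ) : (0:ℝ) < 1 + t^2 := by positivity

lemma g_cont (t₀ : ℝ) (ε : ℝ) (hε : 0 < ε) :
    ∃ δ > 0, ∀ t : ℝ, |t - t₀| < δ → |g0 t - g0 t₀| < ε ∧ |g1 t - g1 t₀| < ε := by
  have h0 : ContinuousAt g0 t₀ := by
    unfold g0
    exact ContinuousAt.div (by fun_prop) (by fun_prop) (denom_pos t₀).ne'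
  have h1 : ContinuousAt g1 t₀ := by
    unfold g1
    exact ContinuousAt.div (by fun_prop) (by fun_prop) (denom_pos t₀).ne'
  rw [Metric.continuousAt_iff] at h0 h1
  obtain ⟨δ0, hδ0, H0⟩ := h0 ε hε
  obtain ⟨δ1, hδ1, H1⟩ := h1 ε hε
  refine ⟨min δ0 δ1, lt_min hδ0 hδ1, fun t ht => ?_⟩
  rw [lt_min_iff] at ht
  constructor
  · have := H0 (show dist t t₀ < δ0 by simpa [Real.dist_eq] using ht.1)
    simpa [Real.dist_eq] using this
  · have := H1 (show dist t t₀ < δ1 by simpa [Real.dist_eq] using ht.2)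
    simpa [Real.dist_eq] using this

lemma g_inj {s t : ℝ} (h0 : g0 s = g0 t) (h1 : g1 s = g1 t) : s = t := by
  have hs := denom_pos s
  have ht := denom_pos t
  unfold g0 at h0
  unfold g1 at h1
  rw [div_eq_div_iff hs.ne' ht.ne'] at h0 h1
  have hsq : s^2 = t^2 := by nlinarith
  rw [hsq] at h1
  have h2 : (2*s - 2*t) * (1 + t^2) = 0 := by linear_combination h1
  rcases mul_eq_zero.mp h2 with h | h
  · linarith
  · linarith

lemma g_point {x₀ x₁ : ℝ} (hx : x₀^2 + x₁^2 = 1) (hx0 : x₀ ≠ -1) :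
    g0 (x₁ / (1 + x₀)) = x₀ ∧ g1 (x₁ / (1 + x₀)) = x₁ := by
  have h1 : x₀ > -1 := by
    rcases lt_or_eq_of_le (show x₀ ≥ -1 by nlinarith [sq_nonneg x₁, sq_nonneg (x₀+1)]) with h | h
    · exact h
    · exact absurd h.symm hx0
  have hd : (0:ℝ) < 1 + x₀ := by linarith
  have key : 1 + (x₁ / (1+x₀))^2 = 2 / (1+x₀) := by
    field_simp
    nlinarith
  constructor
  · unfold g0
    rw [key]
    field_simp
    nlinarith
  · unfold g1
    rw [key]
    field_simp

lemma two_points {x₀ x₁ : ℝ} (hx : x₀^2 + x₁^2 = 1) {ε : ℝ} (hε : 0 < ε) :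
    ∃ s t : ℝ, s ≠ t ∧ (∃ a b : ℤ, 0 < b ∧ (a:ℝ)/b = s) ∧ (∃ a b : ℤ, 0 < b ∧ (a:ℝ)/b = t) ∧
      |g0 s - x₀| < ε ∧ |g1 s - x₁| < ε ∧ |g0 t - x₀| < ε ∧ |g1 t - x₁| < ε := by
  by_cases hx0 : x₀ = -1
  · -- x₁ = 0
    have hx1 : x₁ = 0 := by nlinarith
    obtain ⟨n, hn⟩ := exists_nat_gt (2/ε)
    have hn0 : (0:ℝ) < 2/ε := by positivity
    have hnpos : (0:ℝ) < n := lt_trans hn0 hn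
    have bound : ∀ m : ℝ, (n:ℝ) ≤ m → |g0 m - x₀| < ε ∧ |g1 m - x₁| < ε := by
      intro m hm
      have hmpos : (0:ℝ) < m := lt_of_lt_of_le hnpos hm
      have hdm := denom_pos m
      have h2m : 2/ε < m := lt_of_lt_of_le hn hm
      have hmε : 2/m < ε := by
        rw [div_lt_iff₀ hmpos]
        rw [div_lt_iff₀ hε] at h2m
        linarith
      constructor
      · rw [hx0]
        unfold g0
        have : (1 - m^2)/(1+m^2) - (-1) = 2/(1+m^2) := by field_simp; ring
        rw [this, abs_of_pos (by positivity)]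
        have : 2/(1+m^2) < 2/m := by
          apply div_lt_div_of_pos_left (by norm_num) hmpos
          nlinarith
        linarith
      · rw [hx1]
        unfold g1
        have h1 : 2*m/(1+m^2) - 0 = 2*m/(1+m^2) := by ring
        rw [h1, abs_of_pos (by positivity)]
        have : 2*m/(1+m^2) ≤ 2/m := by
          rw [div_le_div_iff₀ hdm hmpos]
          nlinarith
        linarith
    refine ⟨n, n+1, by norm_num, ⟨n, 1, one_pos, by norm_num⟩, ⟨n+1, 1, one_pos, by push_cast; ring⟩,
      (bound n le_rfl).1, (bound n le_rfl).2, (bound (n+1) (by linarith)).1, (bound (n+1) (by linarith)).2⟩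
  · set t₀ := x₁ / (1 + x₀) with ht₀
    obtain ⟨hg0, hg1⟩ := g_point hx hx0
    obtain ⟨δ, hδ, H⟩ := g_cont t₀ ε hε
    obtain ⟨q, hq1, hq2⟩ := exists_rat_btwn (show t₀ - δ < t₀ by linarith)
    obtain ⟨q', hq1', hq2'⟩ := exists_rat_btwn (show t₀ < t₀ + δ by linarith)
    have hs : |(q:ℝ) - t₀| < δ := by rw [abs_lt]; constructor <;> linarith
    have ht : |(q':ℝ) - t₀| < δ := by rw [abs_lt]; constructor <;> linarith
    obtain ⟨B0, B1⟩ := H q hs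
    obtain ⟨B0', B1'⟩ := H q' ht
    simp only [ht₀, hg0, hg1] at B0 B1 B0' B1'
    refine ⟨q, q', by push_cast; intro h; rw [h] at hq2; linarith, ?_, ?_, B0, B1, B0', B1'⟩
    · exact ⟨q.num, q.den, by exact_mod_cast q.pos, by rw [Rat.cast_def]; norm_cast⟩
    · exact ⟨q'.num, q'.den, by exact_mod_cast q'.pos, by rw [Rat.cast_def]; norm_cast⟩

noncomputable def pt (s : ℝ) : EuclideanSpace ℝ (Fin 2) := WithLp.toLp 2 ![g0 s, g1 s]

@[simp] lemma pt_apply_zero (s : ℝ) : pt s 0 = g0 s := rfl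
@[simp] lemma pt_apply_one (s : ℝ) : pt s 1 = g1 s := rfl

lemma g0_frac (a b : ℤ) (hb : b ≠ 0) :
    g0 ((a:ℝ)/b) = ((b^2 - a^2 : ℤ):ℝ) / ((a^2 + b^2 : ℤ):ℝ) := by
  have hb' : (b:ℝ) ≠ 0 := Int.cast_ne_zero.mpr hb
  unfold g0
  push_cast
  have h1 : (1 : ℝ) + ((a:ℝ)/b)^2 = ((a:ℝ)^2 + b^2)/b^2 := by field_simp; ring
  have h2 : (1 : ℝ) - ((a:ℝ)/b)^2 = ((b:ℝ)^2 - a^2)/b^2 := by field_simp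
  rw [h1, h2, div_div_div_comm, div_self (by positivity : ((b:ℝ))^2 ≠ 0), div_one]

lemma g1_frac (a b : ℤ) (hb : b ≠ 0) :
    g1 ((a:ℝ)/b) = ((2*a*b : ℤ):ℝ) / ((a^2 + b^2 : ℤ):ℝ) := by
  have hb' : (b:ℝ) ≠ 0 := Int.cast_ne_zero.mpr hb
  unfold g1
  push_cast
  have h1 : (1 : ℝ) + ((a:ℝ)/b)^2 = ((a:ℝ)^2 + b^2)/b^2 := by field_simp; ring
  have h2 : 2 * ((a:ℝ)/b) = (2*(a:ℝ)*b)/b^2 := by field_simp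
  rw [h1, h2, div_div_div_comm, div_self (by positivity : ((b:ℝ))^2 ≠ 0), div_one]

lemma norm_intVec2 (v : Fin 2 → ℤ) :
    ‖intVec2 v‖ = Real.sqrt (((v 0 : ℝ))^2 + ((v 1 : ℝ))^2) := by
  rw [EuclideanSpace.norm_eq]
  simp [Fin.sum_univ_two, intVec2, sq_abs]

lemma norm_scaled (c a b : ℤ) (hc : 0 ≤ c) :
    ‖intVec2 ![c * (b^2 - a^2), c * (2*a*b)]‖ = ((c * (a^2 + b^2) : ℤ) : ℝ) := by
  rw [norm_intVec2]
  simp only [Matrix.cons_val_zero, Matrix.cons_val_one, Matrix.head_cons]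
  rw [show ((c * (b^2-a^2) : ℤ):ℝ)^2 + ((c * (2*a*b) : ℤ):ℝ)^2 = ((c * (a^2+b^2) : ℤ):ℝ)^2 by
    push_cast; ring]
  apply Real.sqrt_sq
  have hcR : (0:ℝ) ≤ (c:ℝ) := by exact_mod_cast hc
  push_cast
  positivity

lemma normalized_eq (c a b : ℤ) (hc : 0 < c) (hb : 0 < b) :
    ‖intVec2 ![c * (b^2 - a^2), c * (2*a*b)]‖⁻¹ • intVec2 ![c * (b^2 - a^2), c * (2*a*b)]
      = pt ((a:ℝ)/b) := by
  have hbR : (0:ℝ) < (b:ℝ) := by exact_mod_cast hb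
  have hcR : (0:ℝ) < (c:ℝ) := by exact_mod_cast hc
  have hA : (0:ℝ) < ((a:ℝ)^2 + (b:ℝ)^2) := by positivity
  rw [norm_scaled c a b hc.le]
  ext i
  fin_cases i
  all_goals rw [show pt ((a:ℝ)/b) = WithLp.toLp 2 ![g0 ((a:ℝ)/b), g1 ((a:ℝ)/b)] from rfl,
    g0_frac a b hb.ne', g1_frac a b hb.ne']
  · show (((c * (a^2+b^2) : ℤ):ℝ))⁻¹ * ((c * (b^2 - a^2) : ℤ):ℝ) = _
    push_cast
    field_simp
  · show (((c * (a^2+b^2) : ℤ):ℝ))⁻¹ * ((c * (2*a*b) : ℤ):ℝ) = _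
    push_cast
    field_simp

lemma g_unit (t : ℝ) : (g0 t)^2 + (g1 t)^2 = 1 := by
  have h := denom_pos t
  unfold g0 g1
  field_simp
  ring

lemma pt_norm (s : ℝ) : ‖pt s‖ = 1 := by
  rw [EuclideanSpace.norm_eq]
  simp only [Fin.sum_univ_two, pt_apply_zero, pt_apply_one, Real.norm_eq_abs, sq_abs]
  rw [g_unit s]
  exact Real.sqrt_one

lemma pt_mem_sphere (s : ℝ) :
    pt s ∈ Metric.sphere (0 : EuclideanSpace ℝ (Fin 2)) 1 := by
  rw [mem_sphere_zero_iff_norm]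
  exact pt_norm s

set_option maxHeartbeats 1000000 in
/-- **Lattice vectors within a given arc.** If `U` is a nonempty open arc of the unit
circle `S¹ ⊂ ℝ²` (a nonempty relatively open connected proper subset of the circle),
then there are `v₁, v₂ ∈ ℤ²` which are linearly independent over `ℝ`, have the same
norm, this common norm is a positive integer, and whose normalizations lie in `U`. -/
theorem lattice_vectors_in_arc (U : Set (EuclideanSpace ℝ (Fin 2)))
    (hsub : U ⊆ Metric.sphere (0 : EuclideanSpace ℝ (Fin 2)) 1)
    (hne : U.Nonempty) (hconn : IsConnected U)
    (hopen : ∃ V : Set (EuclideanSpace ℝ (Fin 2)), IsOpen V ∧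
      U = V ∩ Metric.sphere (0 : EuclideanSpace ℝ (Fin 2)) 1)
    (hproper : U ≠ Metric.sphere (0 : EuclideanSpace ℝ (Fin 2)) 1) :
    ∃ v₁ v₂ : Fin 2 → ℤ,
      LinearIndependent ℝ ![intVec2 v₁, intVec2 v₂] ∧
      ‖intVec2 v₁‖ = ‖intVec2 v₂‖ ∧
      (∃ N : ℕ, 0 < N ∧ ‖intVec2 v₁‖ = (N : ℝ)) ∧
      ‖intVec2 v₁‖⁻¹ • intVec2 v₁ ∈ U ∧
      ‖intVec2 v₂‖⁻¹ • intVec2 v₂ ∈ U := by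
  obtain ⟨V, hV, hUV⟩ := hopen
  obtain ⟨x, hx⟩ := hne
  have hxV : x ∈ V := (hUV ▸ hx).1
  have hxS : x ∈ Metric.sphere (0 : EuclideanSpace ℝ (Fin 2)) 1 := (hUV ▸ hx).2
  obtain ⟨ε, hε, hball⟩ := Metric.isOpen_iff.mp hV x hxV
  set ε₁ := min ε 1 with hε₁def
  have hε₁ : 0 < ε₁ := lt_min hε one_pos
  have hε₁ε : ε₁ ≤ ε := min_le_left _ _
  have hε₁1 : ε₁ ≤ 1 := min_le_right _ _
  have hxnorm : ‖x‖ = 1 := by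
    rw [Metric.mem_sphere, dist_zero_right] at hxS; exact hxS
  have hxx : (x 0)^2 + (x 1)^2 = 1 := by
    rw [EuclideanSpace.norm_eq] at hxnorm
    simp only [Fin.sum_univ_two, Real.norm_eq_abs, sq_abs] at hxnorm
    have hS : (0:ℝ) ≤ (x 0)^2 + (x 1)^2 := by positivity
    calc (x 0)^2 + (x 1)^2 = Real.sqrt ((x 0)^2 + (x 1)^2)^2 := (Real.sq_sqrt hS).symm
      _ = 1 := by rw [hxnorm]; norm_num
  obtain ⟨s, t, hst, ⟨a, b, hb, hab⟩, ⟨a', b', hb', hab'⟩, B0, B1, B0', B1'⟩ :=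
    two_points hxx (half_pos hε₁)
  -- the two candidate points on the circle
  set u : EuclideanSpace ℝ (Fin 2) := pt s with hu
  set w : EuclideanSpace ℝ (Fin 2) := pt t with hw
  -- membership of the candidate points in U
  have mem_of_close : ∀ r : ℝ, |g0 r - x 0| < ε₁/2 → |g1 r - x 1| < ε₁/2 → pt r ∈ V := by
    intro r h0 h1
    apply hball
    rw [Metric.mem_ball, EuclideanSpace.dist_eq]
    simp only [Fin.sum_univ_two, pt_apply_zero, pt_apply_one, Real.dist_eq, sq_abs]
    have hlt : (g0 r - x 0)^2 + (g1 r - x 1)^2 < ε^2 := by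
      have a0 := abs_lt.mp h0
      have a1 := abs_lt.mp h1
      have hq : (g0 r - x 0)^2 + (g1 r - x 1)^2 < ε₁^2 := by nlinarith
      nlinarith
    rw [show ε = Real.sqrt (ε^2) by rw [Real.sqrt_sq hε.le]]
    exact Real.sqrt_lt_sqrt (by positivity) hlt
  have huU : u ∈ U := by
    rw [hUV]
    exact ⟨mem_of_close s B0 B1, pt_mem_sphere s⟩
  have hwU : w ∈ U := by
    rw [hUV]
    exact ⟨mem_of_close t B0' B1', pt_mem_sphere t⟩
  -- u ≠ w and u ≠ -w
  have hune : u ≠ w := by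
    intro h
    apply hst
    exact g_inj (congrArg (fun v => v 0) h) (congrArg (fun v => v 1) h)
  have hanti : u ≠ -w := by
    intro h
    have hd : dist u w < 2 := by
      have h1 : dist u x < ε₁ := by
        rw [EuclideanSpace.dist_eq]
        simp only [Fin.sum_univ_two, hu, Matrix.cons_val_zero, Matrix.cons_val_one,
          Matrix.head_cons, Real.dist_eq, sq_abs, pt_apply_zero, pt_apply_one]
        have a0 := abs_lt.mp B0
        have a1 := abs_lt.mp B1
        rw [show ε₁ = Real.sqrt (ε₁^2) by rw [Real.sqrt_sq hε₁.le]]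
        exact Real.sqrt_lt_sqrt (by positivity) (by nlinarith)
      have h2 : dist x w < ε₁ := by
        rw [EuclideanSpace.dist_eq]
        simp only [Fin.sum_univ_two, hw, Matrix.cons_val_zero, Matrix.cons_val_one,
          Matrix.head_cons, Real.dist_eq, sq_abs, pt_apply_zero, pt_apply_one]
        have a0 := abs_lt.mp B0'
        have a1 := abs_lt.mp B1'
        rw [show ε₁ = Real.sqrt (ε₁^2) by rw [Real.sqrt_sq hε₁.le]]
        exact Real.sqrt_lt_sqrt (by positivity) (by nlinarith)
      calc dist u w ≤ dist u x + dist x w := dist_triangle u x w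
        _ < ε₁ + ε₁ := by linarith
        _ ≤ 2 := by linarith
    have hwnorm : ‖w‖ = 1 := pt_norm t
    rw [h, dist_eq_norm] at hd
    have : -w - w = (-2 : ℝ) • w := by module
    rw [this, norm_smul] at hd
    simp [hwnorm] at hd
  -- the integer vectors
  refine ⟨![(a'^2 + b'^2) * (b^2 - a^2), (a'^2 + b'^2) * (2*a*b)],
    ![(a^2 + b^2) * (b'^2 - a'^2), (a^2 + b^2) * (2*a'*b')], ?_⟩
  have hA : (0:ℤ) < a^2 + b^2 := by positivity
  have hA' : (0:ℤ) < a'^2 + b'^2 := by positivity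
  have hn1 : ‖intVec2 ![(a'^2 + b'^2) * (b^2 - a^2), (a'^2 + b'^2) * (2*a*b)]‖
      = (((a'^2 + b'^2) * (a^2 + b^2) : ℤ) : ℝ) := norm_scaled _ a b hA'.le
  have hn2 : ‖intVec2 ![(a^2 + b^2) * (b'^2 - a'^2), (a^2 + b^2) * (2*a'*b')]‖
      = (((a^2 + b^2) * (a'^2 + b'^2) : ℤ) : ℝ) := norm_scaled _ a' b' hA.le
  have hNpos : (0:ℤ) < (a'^2 + b'^2) * (a^2 + b^2) := mul_pos hA' hA
  have hnormpos : (0:ℝ) < (((a'^2 + b'^2) * (a^2 + b^2) : ℤ) : ℝ) := by exact_mod_cast hNpos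
  have hu1 : ‖intVec2 ![(a'^2 + b'^2) * (b^2 - a^2), (a'^2 + b'^2) * (2*a*b)]‖⁻¹ •
      intVec2 ![(a'^2 + b'^2) * (b^2 - a^2), (a'^2 + b'^2) * (2*a*b)] = u := by
    rw [normalized_eq _ a b hA' hb, hu, hab]
  have hw1 : ‖intVec2 ![(a^2 + b^2) * (b'^2 - a'^2), (a^2 + b^2) * (2*a'*b')]‖⁻¹ •
      intVec2 ![(a^2 + b^2) * (b'^2 - a'^2), (a^2 + b^2) * (2*a'*b')] = w := by
    rw [normalized_eq _ a' b' hA hb', hw, hab']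
  refine ⟨?_, ?_, ?_, ?_, ?_⟩
  · -- linear independence
    refine linearIndependent_fin2.mpr ⟨?_, ?_⟩
    all_goals have hcomm : ((a^2+b^2)*(a'^2+b'^2) : ℤ) = (a'^2+b'^2)*(a^2+b^2) := by ring
    · intro h
      simp only [Matrix.cons_val_one, Matrix.head_cons, Matrix.cons_val_zero] at h
      rw [h, norm_zero, hcomm] at hn2
      exact absurd hn2.symm hnormpos.ne'
    · intro c hc
      simp only [Matrix.cons_val_one, Matrix.head_cons, Matrix.cons_val_zero] at hc
      have hcnorm := congrArg norm hc
      rw [norm_smul, hn1, hn2, Real.norm_eq_abs, hcomm] at hcnorm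
      have habs : |c| = 1 := by
        have h1 : |c| * ((((a'^2 + b'^2) * (a^2 + b^2) : ℤ)):ℝ)
            = 1 * ((((a'^2 + b'^2) * (a^2 + b^2) : ℤ)):ℝ) := by rw [one_mul]; exact hcnorm
        exact mul_right_cancel₀ hnormpos.ne' h1
      rcases (abs_eq (zero_le_one)).mp habs with h1 | h1
      · rw [h1, one_smul] at hc
        apply hune
        rw [← hu1, ← hw1, hc]
      · rw [h1] at hc
        have hv : intVec2 ![(a'^2 + b'^2) * (b^2 - a^2), (a'^2 + b'^2) * (2*a*b)]
            = -intVec2 ![(a^2 + b^2) * (b'^2 - a'^2), (a^2 + b^2) * (2*a'*b')] := by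
          rw [← hc, neg_one_smul]
        apply hanti
        rw [← hu1, ← hw1, hv, norm_neg, smul_neg]
  · -- equal norms
    rw [hn1, hn2]; push_cast; ring
  · -- the norm is a positive integer
    refine ⟨((a'^2 + b'^2) * (a^2 + b^2)).toNat, by omega, ?_⟩
    rw [hn1]
    exact_mod_cast congrArg (Int.cast : ℤ → ℝ) (Int.toNat_of_nonneg hNpos.le).symm
  · rw [hu1]; exact huU
  · rw [hw1]; exact hwU
end

section
/- Let m : R^2 \ {0} → C^2 be continuous, homogeneous of degree 0 (m(λξ) = m(ξ) for all λ > 0), satisfying the reality condition m(ξ) = conjugate(m(-ξ)) for all ξ, the divergence-free condition ξ · m(ξ) = 0 for all ξ ≠ 0, and suppose m is not odd, i.e. there exists ξ with m(ξ) + m(-ξ) ≠ 0. Then there exist k1, k2 in Z^2 with |k1| = |k2| such that the two real vectors m(k1) + m(-k1) and m(k2) + m(-k2) form a basis of R^2. -/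
/-- The real vector `m(ξ) + m(-ξ)` (real by the reality condition), taken componentwise
via real parts. -/
noncomputable def symPart (m : EuclideanSpace ℝ (Fin 2) → EuclideanSpace ℂ (Fin 2))
    (ξ : EuclideanSpace ℝ (Fin 2)) : EuclideanSpace ℝ (Fin 2) :=
  WithLp.toLp 2 (fun i => (m ξ i + m (-ξ) i).re)

noncomputable def circ2 (t : ℝ) : EuclideanSpace ℝ (Fin 2) :=
  WithLp.toLp 2 ![(1 - t ^ 2) / (1 + t ^ 2), 2 * t / (1 + t ^ 2)]

lemma circ2_zero (t : ℝ) : circ2 t 0 = (1 - t ^ 2) / (1 + t ^ 2) := rfl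
lemma circ2_one (t : ℝ) : circ2 t 1 = 2 * t / (1 + t ^ 2) := rfl

lemma circ2_ne (t : ℝ) : circ2 t ≠ 0 := by
  intro h
  by_cases ht : t = 0
  · have := congrFun (congrArg WithLp.ofLp h) 0
    rw [circ2_zero] at this
    subst ht
    norm_num at this
  · have := congrFun (congrArg WithLp.ofLp h) 1
    rw [circ2_one, show (WithLp.ofLp (0 : EuclideanSpace ℝ (Fin 2)) : Fin 2 → ℝ) 1 = 0 from rfl] at this
    have h2 : (0:ℝ) < 1 + t ^ 2 := by positivity
    field_simp [ht] at this
    simp [ht] at this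
    

lemma circ2_cont : Continuous circ2 := by
  have h : Continuous fun t : ℝ => (![(1 - t ^ 2) / (1 + t ^ 2), 2 * t / (1 + t ^ 2)] : Fin 2 → ℝ) := by
    apply continuous_pi
    intro i
    fin_cases i <;> simp <;>
      exact Continuous.div (by continuity) (by continuity) (fun x => by positivity)
  exact ((PiLp.continuousLinearEquiv 2 ℝ (fun _ : Fin 2 => ℝ)).symm.continuous).comp h

lemma circ2_norm (t : ℝ) : ‖circ2 t‖ = 1 := by
  rw [EuclideanSpace.norm_eq, Fin.sum_univ_two, circ2_zero, circ2_one]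
  have h2 : (0:ℝ) < 1 + t ^ 2 := by positivity
  have : ‖(1 - t ^ 2) / (1 + t ^ 2)‖ ^ 2 + ‖2 * t / (1 + t ^ 2)‖ ^ 2 = 1 := by
    rw [Real.norm_eq_abs, Real.norm_eq_abs, sq_abs, sq_abs]
    field_simp
    ring
  rw [this, Real.sqrt_one]

lemma basis_of_det {v w : EuclideanSpace ℝ (Fin 2)}
    (h : v 0 * w 1 - v 1 * w 0 ≠ 0) :
    LinearIndependent ℝ ![v, w] ∧ Submodule.span ℝ {v, w} = ⊤ := by
  constructor
  · rw [LinearIndependent.pair_iff]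
    intro s t hst
    have h0 : s * v 0 + t * w 0 = 0 := by
      have := congrFun (congrArg WithLp.ofLp hst) 0
      simpa [PiLp.add_apply, PiLp.smul_apply, smul_eq_mul] using this
    have h1 : s * v 1 + t * w 1 = 0 := by
      have := congrFun (congrArg WithLp.ofLp hst) 1
      simpa [PiLp.add_apply, PiLp.smul_apply, smul_eq_mul] using this
    constructor
    · have hs : s * (v 0 * w 1 - v 1 * w 0) = 0 := by linear_combination w 1 * h0 - w 0 * h1
      exact (mul_eq_zero.mp hs).resolve_right h
    · have ht : t * (v 0 * w 1 - v 1 * w 0) = 0 := by linear_combination v 0 * h1 - v 1 * h0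
      exact (mul_eq_zero.mp ht).resolve_right h
  · rw [eq_top_iff]
    intro x _
    rw [Submodule.mem_span_pair]
    refine ⟨(x 0 * w 1 - x 1 * w 0) / (v 0 * w 1 - v 1 * w 0),
      (v 0 * x 1 - v 1 * x 0) / (v 0 * w 1 - v 1 * w 0), ?_⟩
    ext i
    fin_cases i <;>
    · simp only [PiLp.add_apply, PiLp.smul_apply, smul_eq_mul, Fin.zero_eta, Fin.mk_one]
      rw [div_mul_eq_mul_div, div_mul_eq_mul_div, ← add_div, div_eq_iff h]
      ring


lemma symPart_neg (m : EuclideanSpace ℝ (Fin 2) → EuclideanSpace ℂ (Fin 2))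
    (ξ : EuclideanSpace ℝ (Fin 2)) : symPart m (-ξ) = symPart m ξ := by
  ext i
  simp [symPart, neg_neg, add_comm]

/-- **Non-degeneracy of a non-odd divergence-free multiplier in two dimensions.**
If `m : ℝ² \ {0} → ℂ²` is continuous, homogeneous of degree `0`, satisfies the reality
condition `m(ξ) = conj (m(-ξ))`, the divergence-free condition `ξ · m(ξ) = 0`, and is
not odd, then there are `k₁, k₂ ∈ ℤ²` with `|k₁| = |k₂|` such that the real vectors
`m(k₁) + m(-k₁)` and `m(k₂) + m(-k₂)` form a basis of `ℝ²`. -/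
theorem multiplier_nondegenerate
    (m : EuclideanSpace ℝ (Fin 2) → EuclideanSpace ℂ (Fin 2))
    (hcont : ContinuousOn m {ξ | ξ ≠ 0})
    (hhom : ∀ ξ : EuclideanSpace ℝ (Fin 2), ξ ≠ 0 → ∀ l : ℝ, 0 < l → m (l • ξ) = m ξ)
    (hreal : ∀ ξ : EuclideanSpace ℝ (Fin 2), ξ ≠ 0 → ∀ i : Fin 2,
      m ξ i = starRingEnd ℂ (m (-ξ) i))
    (hdiv : ∀ ξ : EuclideanSpace ℝ (Fin 2), ξ ≠ 0 →
      ∑ i : Fin 2, (ξ i : ℂ) * m ξ i = 0)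
    (hnotodd : ∃ ξ : EuclideanSpace ℝ (Fin 2), ξ ≠ 0 ∧ m ξ + m (-ξ) ≠ 0) :
    ∃ k₁ k₂ : Fin 2 → ℤ,
      ‖intVec2 k₁‖ = ‖intVec2 k₂‖ ∧
      LinearIndependent ℝ ![symPart m (intVec2 k₁), symPart m (intVec2 k₂)] ∧
      Submodule.span ℝ {symPart m (intVec2 k₁), symPart m (intVec2 k₂)} = ⊤ := by
  classical
  -- homogeneity of symPart
  have hsym_smul : ∀ ξ : EuclideanSpace ℝ (Fin 2), ξ ≠ 0 → ∀ l : ℝ, 0 < l →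
      symPart m (l • ξ) = symPart m ξ := by
    intro ξ hξ l hl
    have h1 : m (l • ξ) = m ξ := hhom ξ hξ l hl
    have h2 : m (-(l • ξ)) = m (-ξ) := by
      rw [show -(l • ξ) = l • (-ξ) by rw [smul_neg]]
      exact hhom (-ξ) (neg_ne_zero.mpr hξ) l hl
    ext i
    simp [symPart, h1, h2]
  -- perpendicularity
  have hperp : ∀ ξ : EuclideanSpace ℝ (Fin 2), ξ ≠ 0 →
      ξ 0 * symPart m ξ 0 + ξ 1 * symPart m ξ 1 = 0 := by
    intro ξ hξ
    have d1 := hdiv ξ hξ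
    have d2 := hdiv (-ξ) (neg_ne_zero.mpr hξ)
    rw [Fin.sum_univ_two] at d1 d2
    have r1 := congrArg Complex.re d1
    have r2 := congrArg Complex.re d2
    simp only [Complex.add_re, Complex.mul_re, Complex.ofReal_re, Complex.ofReal_im,
      Complex.zero_re, zero_mul, sub_zero, PiLp.neg_apply, Complex.neg_re, neg_neg,
      Complex.ofReal_neg, neg_mul] at r1 r2
    simp only [symPart, Complex.add_re, neg_neg]
    nlinarith [r1, r2]
  -- nonvanishing of symPart at the witness
  have hsym_ne : ∀ ξ : EuclideanSpace ℝ (Fin 2), ξ ≠ 0 → m ξ + m (-ξ) ≠ 0 →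
      symPart m ξ ≠ 0 := by
    intro ξ hξ hm hcon
    apply hm
    ext i
    have hi : symPart m ξ i = 0 := by rw [hcon]; rfl
    have hr := hreal ξ hξ i
    have hkey : m ξ i + m (-ξ) i = 2 * ((m (-ξ) i).re : ℂ) := by
      rw [hr]
      rw [add_comm, Complex.add_conj]
      push_cast
      ring
    have hre : (m ξ i + m (-ξ) i).re = 2 * (m (-ξ) i).re := by
      rw [hkey]; simp
    have : (m (-ξ) i).re = 0 := by
      have := hi
      simp only [symPart] at this
      rw [hre] at this
      linarith
    show (m ξ + m (-ξ)) i = 0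
    rw [PiLp.add_apply, hkey, this]
    simp
  obtain ⟨ξa, hξa, hma⟩ := hnotodd
  have hva : symPart m ξa ≠ 0 := hsym_ne ξa hξa hma
  have hna : (0:ℝ) < ‖ξa‖ := norm_pos_iff.mpr hξa
  set ξu : EuclideanSpace ℝ (Fin 2) := ‖ξa‖⁻¹ • ξa with hξudef
  have hξu_ne : ξu ≠ 0 := smul_ne_zero (inv_ne_zero hna.ne') hξa
  have hξu_norm : ‖ξu‖ = 1 := by
    rw [hξudef, norm_smul, Real.norm_eq_abs, abs_of_pos (inv_pos.mpr hna)]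
    field_simp
  have hvu : symPart m ξu ≠ 0 := by
    rw [hξudef, hsym_smul ξa hξa _ (inv_pos.mpr hna)]
    exact hva
  have hsq : ξu 0 ^ 2 + ξu 1 ^ 2 = 1 := by
    have h1 := hξu_norm
    rw [EuclideanSpace.norm_eq, Fin.sum_univ_two, Real.norm_eq_abs, Real.norm_eq_abs,
      sq_abs, sq_abs] at h1
    have h2 : Real.sqrt (ξu 0 ^ 2 + ξu 1 ^ 2) ^ 2 = 1 := by rw [h1]; norm_num
    rwa [Real.sq_sqrt (by positivity)] at h2
  obtain ⟨ξ₂, hξ₂ne, hv2, hsq2, hden⟩ :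
      ∃ ξ₂ : EuclideanSpace ℝ (Fin 2), ξ₂ ≠ 0 ∧ symPart m ξ₂ ≠ 0 ∧
        ξ₂ 0 ^ 2 + ξ₂ 1 ^ 2 = 1 ∧ 1 + ξ₂ 0 ≠ 0 := by
    by_cases h : 1 + ξu 0 = 0
    · refine ⟨-ξu, neg_ne_zero.mpr hξu_ne, ?_, ?_, ?_⟩
      · rw [symPart_neg]; exact hvu
      · simp only [PiLp.neg_apply, neg_sq]; exact hsq
      · simp only [PiLp.neg_apply]
        have : ξu 0 = -1 := by linarith
        rw [this]; norm_num
    · exact ⟨ξu, hξu_ne, hvu, hsq, h⟩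
  set t₀ : ℝ := ξ₂ 1 / (1 + ξ₂ 0) with ht₀def
  have hcirc_t₀ : circ2 t₀ = ξ₂ := by
    ext i
    fin_cases i
    · show (1 - t₀ ^ 2) / (1 + t₀ ^ 2) = ξ₂ 0
      rw [ht₀def]
      field_simp
      linear_combination (-(1 + ξ₂ 0)) * hsq2
    · show 2 * t₀ / (1 + t₀ ^ 2) = ξ₂ 1
      rw [ht₀def]
      field_simp
      linear_combination (-(ξ₂ 1)) * hsq2
  obtain ⟨i₀, hi₀⟩ : ∃ i, symPart m ξ₂ i ≠ 0 := by
    by_contra hcontra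
    push_neg at hcontra
    exact hv2 (by ext i; exact hcontra i)
  -- continuity of the component along the circle
  have hc1 : Continuous fun t => m (circ2 t) :=
    hcont.comp_continuous circ2_cont (fun t => circ2_ne t)
  have hc2 : Continuous fun t => m (-(circ2 t)) :=
    hcont.comp_continuous (circ2_cont.neg) (fun t => neg_ne_zero.mpr (circ2_ne t))
  have hch : Continuous fun t => symPart m (circ2 t) i₀ := by
    have e1 : Continuous fun t : ℝ => m (circ2 t) i₀ :=
      (EuclideanSpace.proj i₀).continuous.comp hc1
    have e2 : Continuous fun t : ℝ => m (-(circ2 t)) i₀ :=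
      (EuclideanSpace.proj i₀).continuous.comp hc2
    exact Complex.continuous_re.comp (e1.add e2)
  have hopen : IsOpen {t : ℝ | symPart m (circ2 t) i₀ ≠ 0} := by
    have : {t : ℝ | symPart m (circ2 t) i₀ ≠ 0} =
        (fun t => symPart m (circ2 t) i₀) ⁻¹' ({0}ᶜ) := rfl
    rw [this]
    exact hch.isOpen_preimage _ isOpen_compl_singleton
  have ht₀mem : t₀ ∈ {t : ℝ | symPart m (circ2 t) i₀ ≠ 0} := by
    show symPart m (circ2 t₀) i₀ ≠ 0
    rw [hcirc_t₀]
    exact hi₀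
  obtain ⟨δ, hδpos, hball⟩ := Metric.isOpen_iff.mp hopen t₀ ht₀mem
  have hmem : ∀ r : ℚ, t₀ < (r:ℝ) → (r:ℝ) < t₀ + δ → symPart m (circ2 (r:ℝ)) i₀ ≠ 0 := by
    intro r h1 h2
    have : (r:ℝ) ∈ Metric.ball t₀ δ := by
      rw [Metric.mem_ball, Real.dist_eq, abs_lt]
      constructor <;> linarith
    exact hball this
  obtain ⟨r₁, hr₁, hr₁'⟩ := exists_rat_btwn (show t₀ < t₀ + δ by linarith)
  obtain ⟨r₂, hr₂, hr₂'⟩ := exists_rat_btwn hr₁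
  obtain ⟨r₃, hr₃, hr₃'⟩ := exists_rat_btwn hr₂
  obtain ⟨a, b, hab, habne, ha, hb⟩ :
      ∃ a b : ℚ, a ≠ b ∧ (a:ℝ) * (b:ℝ) ≠ -1 ∧
        symPart m (circ2 (a:ℝ)) i₀ ≠ 0 ∧ symPart m (circ2 (b:ℝ)) i₀ ≠ 0 := by
    by_cases hc : (r₁:ℝ) * (r₂:ℝ) = -1
    · refine ⟨r₁, r₃, ?_, ?_, hmem r₁ hr₁ hr₁', hmem r₃ hr₃ (by linarith)⟩
      · have : (r₃:ℝ) < (r₁:ℝ) := by linarith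
        intro h; rw [h] at this; exact lt_irrefl _ this
      · intro h
        have hr₁0 : (r₁:ℝ) ≠ 0 := by
          intro h0; rw [h0] at hc; norm_num at hc
        have : (r₂:ℝ) = (r₃:ℝ) := mul_left_cancel₀ hr₁0 (hc.trans h.symm)
        linarith
    · exact ⟨r₁, r₂, (by intro h; rw [h] at hr₂'; exact lt_irrefl _ hr₂'),
        hc, hmem r₁ hr₁ hr₁', hmem r₂ (by linarith) (by linarith)⟩
  -- integer data
  set p₁ : ℤ := a.num with hp₁def
  set q₁ : ℤ := (a.den : ℤ) with hq₁def
  set p₂ : ℤ := b.num with hp₂def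
  set q₂ : ℤ := (b.den : ℤ) with hq₂def
  have hq₁pos : 0 < q₁ := by rw [hq₁def]; exact_mod_cast a.pos
  have hq₂pos : 0 < q₂ := by rw [hq₂def]; exact_mod_cast b.pos
  have haq : (a:ℝ) = (p₁:ℝ) / (q₁:ℝ) := by
    rw [Rat.cast_def, hp₁def, hq₁def]; push_cast; ring
  have hbq : (b:ℝ) = (p₂:ℝ) / (q₂:ℝ) := by
    rw [Rat.cast_def, hp₂def, hq₂def]; push_cast; ring
  set N₁ : ℤ := p₁ ^ 2 + q₁ ^ 2 with hN₁def
  set N₂ : ℤ := p₂ ^ 2 + q₂ ^ 2 with hN₂def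
  have hN₁pos : 0 < N₁ := by rw [hN₁def]; positivity
  have hN₂pos : 0 < N₂ := by rw [hN₂def]; positivity
  set k₁ : Fin 2 → ℤ := ![N₂ * (q₁ ^ 2 - p₁ ^ 2), N₂ * (2 * p₁ * q₁)] with hk₁def
  set k₂ : Fin 2 → ℤ := ![N₁ * (q₂ ^ 2 - p₂ ^ 2), N₁ * (2 * p₂ * q₂)] with hk₂def
  have hq₁ne : ((q₁:ℝ)) ≠ 0 := by positivity
  have hq₂ne : ((q₂:ℝ)) ≠ 0 := by positivity
  have hN₁ne : ((N₁:ℝ)) ≠ 0 := by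
    have : (0:ℝ) < (N₁:ℝ) := by exact_mod_cast hN₁pos
    linarith
  have hN₂ne : ((N₂:ℝ)) ≠ 0 := by
    have : (0:ℝ) < (N₂:ℝ) := by exact_mod_cast hN₂pos
    linarith
  have hscale : (0:ℝ) < ((N₁ * N₂ : ℤ) : ℝ) := by
    have := mul_pos hN₁pos hN₂pos
    exact_mod_cast this
  have hk₁eq : intVec2 k₁ = ((N₁ * N₂ : ℤ) : ℝ) • circ2 (a:ℝ) := by
    ext i
    fin_cases i
    · show ((k₁ 0 : ℤ) : ℝ) = ((N₁ * N₂ : ℤ) : ℝ) * ((1 - (a:ℝ) ^ 2) / (1 + (a:ℝ) ^ 2))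
      rw [haq, hk₁def]
      simp only [Matrix.cons_val_zero]
      rw [hN₁def, hN₂def]
      push_cast
      field_simp
      ring
    · show ((k₁ 1 : ℤ) : ℝ) = ((N₁ * N₂ : ℤ) : ℝ) * (2 * (a:ℝ) / (1 + (a:ℝ) ^ 2))
      rw [haq, hk₁def]
      simp only [Matrix.cons_val_one, Matrix.head_cons]
      rw [hN₁def, hN₂def]
      push_cast
      field_simp
      ring
  have hk₂eq : intVec2 k₂ = ((N₁ * N₂ : ℤ) : ℝ) • circ2 (b:ℝ) := by
    ext i
    fin_cases i
    · show ((k₂ 0 : ℤ) : ℝ) = ((N₁ * N₂ : ℤ) : ℝ) * ((1 - (b:ℝ) ^ 2) / (1 + (b:ℝ) ^ 2))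
      rw [hbq, hk₂def]
      simp only [Matrix.cons_val_zero]
      rw [hN₁def, hN₂def]
      push_cast
      field_simp
      ring
    · show ((k₂ 1 : ℤ) : ℝ) = ((N₁ * N₂ : ℤ) : ℝ) * (2 * (b:ℝ) / (1 + (b:ℝ) ^ 2))
      rw [hbq, hk₂def]
      simp only [Matrix.cons_val_one, Matrix.head_cons]
      rw [hN₁def, hN₂def]
      push_cast
      field_simp
      ring
  have hnorm : ‖intVec2 k₁‖ = ‖intVec2 k₂‖ := by
    rw [hk₁eq, hk₂eq, norm_smul, norm_smul, circ2_norm, circ2_norm]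
  have hiv₁ne : intVec2 k₁ ≠ 0 := by
    rw [hk₁eq]
    exact smul_ne_zero hscale.ne' (circ2_ne _)
  have hiv₂ne : intVec2 k₂ ≠ 0 := by
    rw [hk₂eq]
    exact smul_ne_zero hscale.ne' (circ2_ne _)
  set v : EuclideanSpace ℝ (Fin 2) := symPart m (intVec2 k₁) with hvdef
  set w : EuclideanSpace ℝ (Fin 2) := symPart m (intVec2 k₂) with hwdef
  have hv_i₀ : v i₀ ≠ 0 := by
    rw [hvdef, hk₁eq, hsym_smul _ (circ2_ne _) _ hscale]
    exact ha
  have hw_i₀ : w i₀ ≠ 0 := by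
    rw [hwdef, hk₂eq, hsym_smul _ (circ2_ne _) _ hscale]
    exact hb
  have e1 : (intVec2 k₁ 0) * v 0 + (intVec2 k₁ 1) * v 1 = 0 := hperp _ hiv₁ne
  have e2 : (intVec2 k₂ 0) * w 0 + (intVec2 k₂ 1) * w 1 = 0 := hperp _ hiv₂ne
  set A := intVec2 k₁ 0 with hA
  set B := intVec2 k₁ 1 with hB
  set C := intVec2 k₂ 0 with hC
  set D := intVec2 k₂ 1 with hD
  have habR : (a:ℝ) ≠ (b:ℝ) := fun h => hab (by exact_mod_cast h)
  have h3 : (p₂:ℝ) * (q₁:ℝ) - (p₁:ℝ) * (q₂:ℝ) ≠ 0 := by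
    intro h
    apply habR
    rw [haq, hbq, div_eq_div_iff hq₁ne hq₂ne]
    linarith
  have h4 : (q₁:ℝ) * (q₂:ℝ) + (p₁:ℝ) * (p₂:ℝ) ≠ 0 := by
    intro h
    apply habne
    rw [haq, hbq, div_mul_div_comm, div_eq_iff (mul_ne_zero hq₁ne hq₂ne)]
    linarith
  have hdet : A * D - B * C ≠ 0 := by
    have hfac : A * D - B * C =
        2 * (N₁:ℝ) * (N₂:ℝ) *
          (((p₂:ℝ) * (q₁:ℝ) - (p₁:ℝ) * (q₂:ℝ)) * ((q₁:ℝ) * (q₂:ℝ) + (p₁:ℝ) * (p₂:ℝ))) := by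
      rw [hA, hB, hC, hD]
      simp only [intVec2, hk₁def, hk₂def, Matrix.cons_val_zero, Matrix.cons_val_one,
        Matrix.head_cons, hN₁def, hN₂def]
      push_cast
      ring
    rw [hfac]
    exact mul_ne_zero (mul_ne_zero (mul_ne_zero two_ne_zero hN₁ne) hN₂ne)
      (mul_ne_zero h3 h4)
  have hCv : C * v 0 + D * v 1 ≠ 0 := by
    intro h
    have hv0 : v 0 * (A * D - B * C) = 0 := by linear_combination D * e1 - B * h
    have hv1 : v 1 * (A * D - B * C) = 0 := by linear_combination A * h - C * e1
    have hv0' : v 0 = 0 := (mul_eq_zero.mp hv0).resolve_right hdet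
    have hv1' : v 1 = 0 := (mul_eq_zero.mp hv1).resolve_right hdet
    apply hv_i₀
    fin_cases i₀ <;> assumption
  have hAw : A * w 0 + B * w 1 ≠ 0 := by
    intro h
    have hw0 : w 0 * (A * D - B * C) = 0 := by linear_combination D * h - B * e2
    have hw1 : w 1 * (A * D - B * C) = 0 := by linear_combination A * e2 - C * h
    have hw0' : w 0 = 0 := (mul_eq_zero.mp hw0).resolve_right hdet
    have hw1' : w 1 = 0 := (mul_eq_zero.mp hw1).resolve_right hdet
    apply hw_i₀
    fin_cases i₀ <;> assumption
  have hdvw : v 0 * w 1 - v 1 * w 0 ≠ 0 := by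
    intro h
    have key : (A * D - B * C) * (v 0 * w 1 - v 1 * w 0) =
        -((C * v 0 + D * v 1) * (A * w 0 + B * w 1)) := by
      linear_combination (C * w 0 + D * w 1) * e1
    rw [h, mul_zero] at key
    exact (mul_ne_zero hCv hAw) (neg_eq_zero.mp key.symm)
  obtain ⟨hli, hsp⟩ := basis_of_det hdvw
  exact ⟨k₁, k₂, hnorm, hli, hsp⟩
end
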